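/- If the field K is quadratically closed (every element of K is a square) and a ∈ UT_n is invertible, then a is ω-invertible (a ω(a) = ω(a) a = −k·I for some k ∈ K^*) if and only if there exists a scalar λ ∈ K^* such that (λa)⁻¹ = ω(λa). -/

import Mathlib

open Matrix

/-- The flip along the antidiagonal. -/
def tFlip {n : ℕ} {K : Type*} [Field K] (x : Matrix (Fin n) (Fin n) K) :
    Matrix (Fin n) (Fin n) K :=
  Matrix.of fun i j => x j.rev i.rev

/-- The minus-flip `ω = −t`. -/
def omg {n : ℕ} {K : Type*} [Field K] (x : Matrix (Fin n) (Fin n) K) :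
    Matrix (Fin n) (Fin n) K :=
  -tFlip x

lemma omg_smul {n : ℕ} {K : Type*} [Field K] (c : K) (x : Matrix (Fin n) (Fin n) K) :
    omg (c • x) = c • omg x := by
  unfold omg tFlip
  ext i j
  simp [Matrix.smul_apply]

/-- over a quadratically closed field, an invertible upper triangular
matrix `a` is `ω`-invertible (`a ω(a) = ω(a) a = −k·I` for some `k ≠ 0`) if and only
if some nonzero scalar multiple `λa` satisfies `(λa)⁻¹ = ω(λa)`. -/
theorem omega_invertible_iff_scalar_multiple {n : ℕ} {K : Type*} [Field K]
    (hchar : (2 : K) ≠ 0) (hquad : ∀ k : K, ∃ x : K, x ^ 2 = k)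
    (a b : Matrix (Fin n) (Fin n) K)
    (hUTa : ∀ i j : Fin n, j < i → a i j = 0)
    (hab : a * b = 1) (hba : b * a = 1) :
    (∃ k : K, k ≠ 0 ∧
        a * omg a = -(k • (1 : Matrix (Fin n) (Fin n) K)) ∧
        omg a * a = -(k • (1 : Matrix (Fin n) (Fin n) K))) ↔
      ∃ lam : K, lam ≠ 0 ∧
        (lam • a) * omg (lam • a) = 1 ∧ omg (lam • a) * (lam • a) = 1 := by
  constructor
  · rintro ⟨k, hk, h1, h2⟩
    obtain ⟨x, hx⟩ := hquad (-k⁻¹)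
    have hx0 : x ≠ 0 := by
      intro h
      apply hk
      have : -k⁻¹ = 0 := by rw [← hx, h]; ring
      field_simp at this
      simp at this
    refine ⟨x, hx0, ?_, ?_⟩
    · rw [omg_smul, smul_mul_assoc, mul_smul_comm, h1, smul_smul, ← pow_two, hx]
      rw [smul_neg, ← neg_smul, neg_neg, smul_smul, inv_mul_cancel₀ hk, one_smul]
    · rw [omg_smul, smul_mul_assoc, mul_smul_comm, h2, smul_smul, ← pow_two, hx]
      rw [smul_neg, ← neg_smul, neg_neg, smul_smul, inv_mul_cancel₀ hk, one_smul]
  · rintro ⟨lam, hlam, h1, h2⟩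
    refine ⟨-(lam ^ 2)⁻¹, by simp [pow_ne_zero, hlam], ?_, ?_⟩
    · rw [omg_smul, smul_mul_assoc, mul_smul_comm, smul_smul, ← pow_two] at h1
      have := congrArg (fun m => (lam ^ 2)⁻¹ • m) h1
      simp only [smul_smul, inv_mul_cancel₀ (pow_ne_zero 2 hlam), one_smul] at this
      rw [this]; simp
    · rw [omg_smul, smul_mul_assoc, mul_smul_comm, smul_smul, ← pow_two] at h2
      have := congrArg (fun m => (lam ^ 2)⁻¹ • m) h2
      simp only [smul_smul, inv_mul_cancel₀ (pow_ne_zero 2 hlam), one_smul] at this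
      rw [this]; simp
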